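/- Let p : X → S be a coCartesian fibration of (∞-)categories (Grothendieck opfibration in the 1-categorical case), K a simplicial set (diagram shape), and r̄ : K^▷ → Fun(Δ¹, X) a colimit diagram in the arrow category such that for every vertex i ∈ K the edge r̄(i,0) → r̄(i,1) is p-coCartesian. Then the edge r̄(∞,0) → r̄(∞,1) at the cone point is also p-coCartesian. In other words, p-coCartesian morphisms are closed under colimits in the arrow category computed pointwise. -/

import Mathlib

/-!
STATEMENT 19: For a coCartesian fibration (Grothendieck opfibration) `p : X ⥤ S`,
coCartesian morphisms are closed under (pointwise) colimits in the arrow category: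
if a colimit cocone in `Arrow X` (computed pointwise at source and target) consists
of `p`-coCartesian arrows, then the arrow at the cone point is `p`-coCartesian.
-/

open CategoryTheory CategoryTheory.Limits

universe w' w v u v' u'

/-- A morphism `φ : x ⟶ y` is `p`-coCartesian if the square of hom-sets
`X(y,z) → X(x,z) ×_{S(px,pz)} S(py,pz)` is a pullback for every `z`, expressed
elementwise via unique lifting. -/
def IsCoCartesianMor {X : Type u} [Category.{v} X] {S : Type u'} [Category.{v'} S]
    (p : X ⥤ S) {x y : X} (φ : x ⟶ y) : Prop :=
  ∀ {z : X} (g : x ⟶ z) (u : p.obj y ⟶ p.obj z), p.map φ ≫ u = p.map g →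
    ∃! v : y ⟶ z, φ ≫ v = g ∧ p.map v = u

/-- `p` is a coCartesian fibration (Grothendieck opfibration): every morphism out of
the image of an object admits a coCartesian lift. -/
def IsOpfibration {X : Type u} [Category.{v} X] {S : Type u'} [Category.{v'} S]
    (p : X ⥤ S) : Prop :=
  ∀ ⦃x : X⦄ ⦃b : S⦄ (f : p.obj x ⟶ b),
    ∃ (y : X) (φ : x ⟶ y) (h : p.obj y = b),
      IsCoCartesianMor p φ ∧ p.map φ = f ≫ eqToHom h.symm

theorem statement19 {X : Type u} [Category.{v} X] {S : Type u'} [Category.{v'} S]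
    (p : X ⥤ S) (hp : IsOpfibration p)
    {J : Type w} [Category.{w'} J] (F : J ⥤ Arrow X) (c : Cocone F)
    (hc : Nonempty (IsColimit c))
    (h0 : Nonempty (IsColimit (Arrow.leftFunc.mapCocone c)))
    (h1 : Nonempty (IsColimit (Arrow.rightFunc.mapCocone c)))
    (hco : ∀ j : J, IsCoCartesianMor p (F.obj j).hom) :
    IsCoCartesianMor p c.pt.hom := by
  obtain ⟨H0⟩ := h0
  obtain ⟨H1⟩ := h1
  -- coCartesian lift of `p.map c.pt.hom` at the source of the cone point
  obtain ⟨w, χ, heq, hχ, hpχ⟩ := hp (p.map c.pt.hom)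
  -- the comparison map `t : w ⟶ c.pt.right`
  have hcond_t : p.map χ ≫ eqToHom heq = p.map c.pt.hom := by
    rw [hpχ]; simp
  obtain ⟨t, ⟨ht1, ht2⟩, htu⟩ := hχ c.pt.hom (eqToHom heq) hcond_t
  -- the squares of the cocone
  have hsq : ∀ j : J, (c.ι.app j).left ≫ c.pt.hom = (F.obj j).hom ≫ (c.ι.app j).right := by
    intro j
    exact Arrow.w (c.ι.app j)
  -- the componentwise inverse maps `sj j : (F.obj j).right ⟶ w`
  have hcond_s : ∀ j : J,
      p.map (F.obj j).hom ≫ (p.map (c.ι.app j).right ≫ eqToHom heq.symm) =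
        p.map ((c.ι.app j).left ≫ χ) := by
    intro j
    calc p.map (F.obj j).hom ≫ (p.map (c.ι.app j).right ≫ eqToHom heq.symm)
        = p.map ((F.obj j).hom ≫ (c.ι.app j).right) ≫ eqToHom heq.symm := by
          rw [p.map_comp, Category.assoc]
      _ = p.map ((c.ι.app j).left ≫ c.pt.hom) ≫ eqToHom heq.symm := by rw [← hsq j]
      _ = p.map ((c.ι.app j).left ≫ χ) := by
          rw [p.map_comp, p.map_comp, hpχ, Category.assoc]
  choose sj hsj using fun j =>
    (hco j ((c.ι.app j).left ≫ χ) (p.map (c.ι.app j).right ≫ eqToHom heq.symm) (hcond_s j))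
  have hsj1 : ∀ j : J, (F.obj j).hom ≫ sj j = (c.ι.app j).left ≫ χ := fun j => (hsj j).1.1
  have hsj2 : ∀ j : J, p.map (sj j) = p.map (c.ι.app j).right ≫ eqToHom heq.symm :=
    fun j => (hsj j).1.2
  have hsju : ∀ (j : J) (y : (F.obj j).right ⟶ w),
      ((F.obj j).hom ≫ y = (c.ι.app j).left ≫ χ ∧
        p.map y = p.map (c.ι.app j).right ≫ eqToHom heq.symm) → y = sj j :=
    fun j y hy => (hsj j).2 y hy
  -- naturality of the `sj`
  have snat : ∀ {i j : J} (f : i ⟶ j), (F.map f).right ≫ sj j = sj i := by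
    intro i j f
    have hleft : (F.map f).left ≫ (c.ι.app j).left = (c.ι.app i).left := by
      have := c.w f
      calc (F.map f).left ≫ (c.ι.app j).left = (F.map f ≫ c.ι.app j).left := rfl
        _ = (c.ι.app i).left := by rw [this]
    have hright : (F.map f).right ≫ (c.ι.app j).right = (c.ι.app i).right := by
      have := c.w f
      calc (F.map f).right ≫ (c.ι.app j).right = (F.map f ≫ c.ι.app j).right := rfl
        _ = (c.ι.app i).right := by rw [this]
    refine hsju i ((F.map f).right ≫ sj j) ⟨?_, ?_⟩
    · have hw : (F.map f).left ≫ (F.obj j).hom = (F.obj i).hom ≫ (F.map f).right :=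
        Arrow.w (F.map f)
      calc (F.obj i).hom ≫ (F.map f).right ≫ sj j
          = ((F.obj i).hom ≫ (F.map f).right) ≫ sj j := by rw [Category.assoc]
        _ = ((F.map f).left ≫ (F.obj j).hom) ≫ sj j := by rw [hw]
        _ = (F.map f).left ≫ ((F.obj j).hom ≫ sj j) := by rw [Category.assoc]
        _ = (F.map f).left ≫ ((c.ι.app j).left ≫ χ) := by rw [hsj1 j]
        _ = ((F.map f).left ≫ (c.ι.app j).left) ≫ χ := by rw [Category.assoc]
        _ = (c.ι.app i).left ≫ χ := by rw [hleft]
    · calc p.map ((F.map f).right ≫ sj j)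
          = p.map (F.map f).right ≫ p.map (sj j) := by rw [p.map_comp]
        _ = p.map (F.map f).right ≫ (p.map (c.ι.app j).right ≫ eqToHom heq.symm) := by
            rw [hsj2 j]
        _ = (p.map (F.map f).right ≫ p.map (c.ι.app j).right) ≫ eqToHom heq.symm := by
            rw [Category.assoc]
        _ = p.map ((F.map f).right ≫ (c.ι.app j).right) ≫ eqToHom heq.symm := by
            rw [p.map_comp]
        _ = p.map (c.ι.app i).right ≫ eqToHom heq.symm := by rw [hright]
  -- the glued map `s : c.pt.right ⟶ w`
  let D : Cocone (F ⋙ Arrow.rightFunc) :=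
    { pt := w
      ι :=
        { app := sj
          naturality := by
            intro i j f
            have := snat f
            exact this.trans (Category.comp_id _).symm } }
  let s : c.pt.right ⟶ w := H1.desc D
  have sfac : ∀ j : J, (c.ι.app j).right ≫ s = sj j := by
    intro j
    have := H1.fac D j
    exact this
  -- `s ≫ t = 𝟙`
  have hst : s ≫ t = 𝟙 c.pt.right := by
    apply H1.hom_ext
    intro j
    have hcond : p.map (F.obj j).hom ≫ p.map (c.ι.app j).right =
        p.map ((c.ι.app j).left ≫ c.pt.hom) := by
      rw [← p.map_comp, ← hsq j]
    have E := hco j ((c.ι.app j).left ≫ c.pt.hom) (p.map (c.ι.app j).right) hcond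
    have e1 : sj j ≫ t = (c.ι.app j).right := by
      refine E.unique ⟨?_, ?_⟩ ⟨?_, ?_⟩
      · calc (F.obj j).hom ≫ sj j ≫ t = ((F.obj j).hom ≫ sj j) ≫ t := by
              rw [Category.assoc]
          _ = ((c.ι.app j).left ≫ χ) ≫ t := by rw [hsj1 j]
          _ = (c.ι.app j).left ≫ (χ ≫ t) := by rw [Category.assoc]
          _ = (c.ι.app j).left ≫ c.pt.hom := by rw [ht1]
      · calc p.map (sj j ≫ t) = p.map (sj j) ≫ p.map t := by rw [p.map_comp]
          _ = (p.map (c.ι.app j).right ≫ eqToHom heq.symm) ≫ eqToHom heq := by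
              rw [hsj2 j, ht2]
          _ = p.map (c.ι.app j).right := by simp
      · exact (hsq j).symm
      · rfl
    have lhs : (Arrow.rightFunc.mapCocone c).ι.app j ≫ s ≫ t =
        (Arrow.rightFunc.mapCocone c).ι.app j ≫ 𝟙 c.pt.right := by
      show (c.ι.app j).right ≫ s ≫ t = (c.ι.app j).right ≫ 𝟙 c.pt.right
      rw [← Category.assoc, sfac j, e1]
      exact (Category.comp_id _).symm
    exact lhs
  -- hence `p.map s` is the canonical identification
  have hps : p.map s = eqToHom heq.symm := by
    have h := congrArg (fun k => p.map k) hst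
    simp only [p.map_comp, p.map_id] at h
    calc p.map s = (p.map s ≫ p.map t) ≫ eqToHom heq.symm := by
          simp only [ht2, Category.assoc, eqToHom_trans, eqToHom_refl, Category.comp_id]
      _ = eqToHom heq.symm := by rw [h, Category.id_comp]
  -- `c.pt.hom ≫ s = χ`
  have hφs : c.pt.hom ≫ s = χ := by
    apply H0.hom_ext
    intro j
    show (c.ι.app j).left ≫ c.pt.hom ≫ s = (c.ι.app j).left ≫ χ
    calc (c.ι.app j).left ≫ c.pt.hom ≫ s = ((c.ι.app j).left ≫ c.pt.hom) ≫ s := by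
          rw [Category.assoc]
      _ = ((F.obj j).hom ≫ (c.ι.app j).right) ≫ s := by rw [hsq j]
      _ = (F.obj j).hom ≫ ((c.ι.app j).right ≫ s) := by rw [Category.assoc]
      _ = (F.obj j).hom ≫ sj j := by rw [sfac j]
      _ = (c.ι.app j).left ≫ χ := hsj1 j
  -- `t ≫ s = 𝟙`
  have hts : t ≫ s = 𝟙 w := by
    have E := hχ χ (𝟙 (p.obj w)) (by simp)
    refine E.unique ⟨?_, ?_⟩ ⟨by simp, by simp⟩
    · calc χ ≫ t ≫ s = (χ ≫ t) ≫ s := by rw [Category.assoc]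
        _ = c.pt.hom ≫ s := by rw [ht1]
        _ = χ := hφs
    · calc p.map (t ≫ s) = p.map t ≫ p.map s := by rw [p.map_comp]
        _ = eqToHom heq ≫ eqToHom heq.symm := by rw [ht2, hps]
        _ = 𝟙 (p.obj w) := by simp
  -- conclude: `c.pt.hom = χ ≫ t` with `t` invertible, hence coCartesian
  intro z g u hu
  have hcond0 : p.map χ ≫ (eqToHom heq ≫ u) = p.map g := by
    rw [hpχ]
    calc (p.map c.pt.hom ≫ eqToHom heq.symm) ≫ eqToHom heq ≫ u
        = p.map c.pt.hom ≫ (eqToHom heq.symm ≫ eqToHom heq) ≫ u := by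
          simp [Category.assoc]
      _ = p.map c.pt.hom ≫ u := by simp
      _ = p.map g := hu
  obtain ⟨v0, ⟨hv01, hv02⟩, hv0u⟩ := hχ g (eqToHom heq ≫ u) hcond0
  refine ⟨s ≫ v0, ⟨?_, ?_⟩, ?_⟩
  · calc c.pt.hom ≫ s ≫ v0 = (c.pt.hom ≫ s) ≫ v0 := by rw [Category.assoc]
      _ = χ ≫ v0 := by rw [hφs]
      _ = g := hv01
  · calc p.map (s ≫ v0) = p.map s ≫ p.map v0 := by rw [p.map_comp]
      _ = eqToHom heq.symm ≫ eqToHom heq ≫ u := by rw [hps, hv02]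
      _ = u := by simp
  · intro y hy
    obtain ⟨hy1, hy2⟩ := hy
    have hty : t ≫ y = v0 := by
      refine hv0u (t ≫ y) ⟨?_, ?_⟩
      · calc χ ≫ t ≫ y = (χ ≫ t) ≫ y := by rw [Category.assoc]
          _ = c.pt.hom ≫ y := by rw [ht1]
          _ = g := hy1
      · calc p.map (t ≫ y) = p.map t ≫ p.map y := by rw [p.map_comp]
          _ = eqToHom heq ≫ u := by rw [ht2, hy2]
    calc y = 𝟙 c.pt.right ≫ y := by rw [Category.id_comp]
      _ = (s ≫ t) ≫ y := by rw [hst]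
      _ = s ≫ (t ≫ y) := by rw [Category.assoc]
      _ = s ≫ v0 := by rw [hty]
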